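/- Let σ > 0 and x ∈ ℝ. Then the Gaussian smoothing of the rectifier y ↦ max(0, y) satisfies ∫_ℝ max(0, y) · k_σ(x − y) dy = (σ/√(2π)) e^{−x²/(2σ²)} + (1/2) x (1 + erf( x / (√2 σ) )). -/

import Mathlib

open MeasureTheory

/-- One-dimensional Gaussian kernel `k_σ(x) = (√(2π) σ)⁻¹ exp(−x²/(2σ²))`. -/
noncomputable def gauss1 (σ x : ℝ) : ℝ :=
  (Real.sqrt (2 * Real.pi) * σ)⁻¹ * Real.exp (-x ^ 2 / (2 * σ ^ 2))

/-- The error function `erf(x) = (2/√π) ∫₀ˣ e^{−t²} dt`. -/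
noncomputable def erf (x : ℝ) : ℝ :=
  (2 / Real.sqrt Real.pi) * ∫ t in (0 : ℝ)..x, Real.exp (-t ^ 2)

open Set Filter in
lemma int_texp {c : ℝ} (hc : 0 < c) (a : ℝ) :
    ∫ t in Set.Ioi a, t * Real.exp (-c * t ^ 2) = Real.exp (-c * a ^ 2) / (2 * c) := by
  have hderiv : ∀ t : ℝ, HasDerivAt (fun t : ℝ => -(Real.exp (-c * t ^ 2) / (2 * c)))
      (t * Real.exp (-c * t ^ 2)) t := by
    intro t
    have h1 : HasDerivAt (fun t : ℝ => -c * t ^ 2) (-c * (2 * t)) t := by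
      simpa using ((hasDerivAt_pow 2 t).const_mul (-c))
    have h2 := (h1.exp.div_const (2 * c)).neg
    refine h2.congr_deriv ?_
    have hc0 : c ≠ 0 := hc.ne'
    field_simp
  have htend : Tendsto (fun t : ℝ => -(Real.exp (-c * t ^ 2) / (2 * c))) atTop (nhds 0) := by
    have h1 : Tendsto (fun t : ℝ => -c * t ^ 2) atTop atBot :=
      (tendsto_pow_atTop two_ne_zero).const_mul_atTop_of_neg (neg_neg_iff_pos.mpr hc)
    have h2 := (Real.tendsto_exp_atBot.comp h1).div_const (2 * c)
    simpa using h2.neg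
  have := integral_Ioi_of_hasDerivAt_of_tendsto' (a := a)
    (f' := fun t => t * Real.exp (-c * t ^ 2))
    (fun t _ => hderiv t) ((integrable_mul_exp_neg_mul_sq hc).integrableOn) htend
  rw [this]
  ring

lemma int_exp {c : ℝ} (hc : 0 < c) (a : ℝ) :
    ∫ t in Set.Ioi a, Real.exp (-c * t ^ 2) =
      Real.sqrt (Real.pi / c) / 2 - ∫ t in (0 : ℝ)..a, Real.exp (-c * t ^ 2) := by
  have hint := integrable_exp_neg_mul_sq hc
  have h1 := intervalIntegral.integral_Iic_add_Ioi (b := a) hint.integrableOn hint.integrableOn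
  have h2 := intervalIntegral.integral_Iic_add_Ioi (b := (0 : ℝ))
    hint.integrableOn hint.integrableOn
  have h3 := intervalIntegral.integral_Iic_sub_Iic (μ := volume)
    (f := fun t => Real.exp (-c * t ^ 2)) (a := (0 : ℝ)) (b := a)
    hint.integrableOn hint.integrableOn
  have h4 := integral_gaussian_Ioi c
  linarith

theorem gaussian_smoothing_relu (σ : ℝ) (hσ : 0 < σ) (x : ℝ) :
    (∫ y : ℝ, max 0 y * gauss1 σ (x - y)) =
      (σ / Real.sqrt (2 * Real.pi)) * Real.exp (-x ^ 2 / (2 * σ ^ 2)) +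
        (1 / 2) * x * (1 + erf (x / (Real.sqrt 2 * σ))) := by
  set c : ℝ := (2 * σ ^ 2)⁻¹ with hc_def
  have hc : 0 < c := by positivity
  set A : ℝ := (Real.sqrt (2 * Real.pi) * σ)⁻¹ with hA_def
  have hgauss : ∀ t : ℝ, gauss1 σ t = A * Real.exp (-c * t ^ 2) := by
    intro t
    simp only [gauss1, hA_def, hc_def]
    ring_nf
  have step1 : (∫ y : ℝ, max 0 y * gauss1 σ (x - y)) =
      ∫ y in Set.Ioi (0 : ℝ), y * gauss1 σ (x - y) := by
    rw [← integral_indicator measurableSet_Ioi]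
    congr 1
    funext y
    by_cases h : 0 < y
    · simp [Set.indicator_of_mem (Set.mem_Ioi.mpr h), max_eq_right h.le]
    · simp [Set.indicator_of_notMem (fun hy => h (Set.mem_Ioi.mp hy)),
        max_eq_left (not_lt.mp h)]
  have step2 : (∫ y in Set.Ioi (0 : ℝ), y * gauss1 σ (x - y)) =
      ∫ t in Set.Ioi (-x), (t + x) * gauss1 σ (x - (t + x)) := by
    have hmp := measurePreserving_add_right (volume : Measure ℝ) x
    have hemb := measurableEmbedding_addRight x
    have := hmp.setIntegral_preimage_emb hemb (fun y => y * gauss1 σ (x - y)) (Set.Ioi 0)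
    rw [← this]
    congr 1
    ext t
    simp [neg_lt_iff_pos_add, add_comm]
  have hsimpl : ∀ t : ℝ, (t + x) * gauss1 σ (x - (t + x)) =
      A * (t * Real.exp (-c * t ^ 2)) + (A * x) * Real.exp (-c * t ^ 2) := by
    intro t
    have h : x - (t + x) = -t := by ring
    rw [h, hgauss]
    ring_nf
  have hint1 : IntegrableOn (fun t : ℝ => A * (t * Real.exp (-c * t ^ 2))) (Set.Ioi (-x)) :=
    ((integrable_mul_exp_neg_mul_sq hc).const_mul A).integrableOn
  have hint2 : IntegrableOn (fun t : ℝ => (A * x) * Real.exp (-c * t ^ 2)) (Set.Ioi (-x)) :=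
    ((integrable_exp_neg_mul_sq hc).const_mul (A * x)).integrableOn
  have step3 : (∫ t in Set.Ioi (-x), (t + x) * gauss1 σ (x - (t + x))) =
      A * (∫ t in Set.Ioi (-x), t * Real.exp (-c * t ^ 2)) +
      (A * x) * (∫ t in Set.Ioi (-x), Real.exp (-c * t ^ 2)) := by
    rw [show (fun t : ℝ => (t + x) * gauss1 σ (x - (t + x))) =
        fun t => A * (t * Real.exp (-c * t ^ 2)) + (A * x) * Real.exp (-c * t ^ 2)
      from funext hsimpl]
    rw [integral_add hint1 hint2, integral_const_mul, integral_const_mul]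
  have hTexp : (∫ t in Set.Ioi (-x), t * Real.exp (-c * t ^ 2)) =
      Real.exp (-c * x ^ 2) / (2 * c) := by
    rw [int_texp hc]; ring_nf
  have hExp : (∫ t in Set.Ioi (-x), Real.exp (-c * t ^ 2)) =
      Real.sqrt (Real.pi / c) / 2 + ∫ t in (0 : ℝ)..x, Real.exp (-c * t ^ 2) := by
    rw [int_exp hc]
    have h := intervalIntegral.integral_comp_neg (a := (0 : ℝ)) (b := -x)
      (fun t => Real.exp (-c * t ^ 2))
    simp only [neg_neg, neg_zero] at h
    have heq : ∀ t : ℝ, Real.exp (-c * (-t) ^ 2) = Real.exp (-c * t ^ 2) := by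
      intro t; ring_nf
    simp only [heq] at h
    rw [h, intervalIntegral.integral_symm]
    ring
  have hs : (0:ℝ) < Real.sqrt 2 * σ := by positivity
  have h2 : (Real.sqrt 2) ^ 2 = 2 := Real.sq_sqrt (by norm_num)
  have hsub : (∫ t in (0 : ℝ)..x, Real.exp (-c * t ^ 2)) =
      (Real.sqrt 2 * σ) * ∫ u in (0 : ℝ)..(x / (Real.sqrt 2 * σ)), Real.exp (-u ^ 2) := by
    have key : ∀ t : ℝ, Real.exp (-c * t ^ 2) =
        Real.exp (-(t * (Real.sqrt 2 * σ)⁻¹) ^ 2) := by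
      intro t
      congr 1
      rw [hc_def, mul_pow, inv_pow, mul_pow, h2]
      ring
    simp_rw [key]
    have h := intervalIntegral.integral_comp_mul_right (a := (0:ℝ)) (b := x)
      (fun u => Real.exp (-u ^ 2)) (ne_of_gt (inv_pos.mpr hs))
    rw [h, zero_mul, smul_eq_mul, inv_inv, div_eq_mul_inv]
  have herf : erf (x / (Real.sqrt 2 * σ)) =
      (2 / Real.sqrt Real.pi) * ∫ u in (0 : ℝ)..(x / (Real.sqrt 2 * σ)), Real.exp (-u ^ 2) :=
    rfl
  have hπ : 0 < Real.pi := Real.pi_pos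
  have hsπ : 0 < Real.sqrt Real.pi := Real.sqrt_pos.mpr hπ
  have hsqrt2π : Real.sqrt (2 * Real.pi) = Real.sqrt 2 * Real.sqrt Real.pi :=
    Real.sqrt_mul (by norm_num) _
  have hsqrtπc : Real.sqrt (Real.pi / c) = Real.sqrt (2 * Real.pi) * σ := by
    have h : Real.pi / c = (2 * Real.pi) * σ ^ 2 := by
      rw [hc_def]; field_simp
    rw [h, Real.sqrt_mul (by positivity), Real.sqrt_sq hσ.le]
  have hcx : -c * x ^ 2 = -x ^ 2 / (2 * σ ^ 2) := by rw [hc_def]; ring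
  rw [step1, step2, step3, hTexp, hExp, hsub, herf, hsqrtπc, hcx]
  set I := ∫ u in (0 : ℝ)..(x / (Real.sqrt 2 * σ)), Real.exp (-u ^ 2)
  set E := Real.exp (-x ^ 2 / (2 * σ ^ 2))
  have hS : (0:ℝ) < Real.sqrt (2 * Real.pi) := by rw [hsqrt2π]; positivity
  have k1 : A / (2 * c) = σ / Real.sqrt (2 * Real.pi) := by
    rw [hA_def, hc_def]
    field_simp
  have k2 : A * (Real.sqrt (2 * Real.pi) * σ) / 2 = 1 / 2 := by
    rw [hA_def]
    field_simp
  have k3 : A * (Real.sqrt 2 * σ) = 1 / Real.sqrt Real.pi := by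
    rw [hA_def, hsqrt2π]
    field_simp
  linear_combination E * k1 + x * k2 + (x * I) * k3
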